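/- Let G = (V, E) be a finite connected graph with n vertices, and let ω = (ω(k))_{k≥1} be an i.i.d. sequence of uniform directed edges. Let Dict(ω) denote the almost surely well-defined vertex v such that for every initial configuration η₀ ∈ {0,1}^V the consensus opinion of the voter model driven by (η₀, ω) equals η₀(v). Then for every vertex k ∈ V, P(Dict(ω) = k) = 1/n. -/

import Mathlib

open MeasureTheory ProbabilityTheory
open scoped ENNReal Classical

/-- The voter-model update map. -/
def voterUpd {V : Type*} [DecidableEq V] (e : V × V) (η : V → Bool) : V → Bool :=
  Function.update η e.2 (η e.1)

/-- The discrete-time voter model driven by `η0` and a sequence of directed edges. -/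
def voterProc {V : Type*} [DecidableEq V] (η0 : V → Bool) (ω : ℕ → V × V) : ℕ → V → Bool
  | 0 => η0
  | k + 1 => voterUpd (ω k) (voterProc η0 ω k)

/-- The consensus opinion of the voter model: `true` iff the all-ones configuration is
eventually reached (the all-ones state is absorbing; on a finite connected graph, driven by
i.i.d. uniform edges, some constant configuration is a.s. eventually reached, so this a.s.
coincides with the eventual constant value). -/
noncomputable def consensus {V : Type*} [DecidableEq V]
    (η0 : V → Bool) (ω : ℕ → V × V) : Bool :=
  if ∃ k : ℕ, ∀ v : V, voterProc η0 ω k v = true then true else false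

section det
variable {V : Type*} [DecidableEq V]

lemma voterUpd_apply (e : V × V) (η : V → Bool) (v : V) :
    voterUpd e η v = if v = e.2 then η e.1 else η v := by
  simp [voterUpd, Function.update_apply]

lemma voterUpd_const {e : V × V} {η : V → Bool} {b : Bool} (h : ∀ v, η v = b) :
    ∀ v, voterUpd e η v = b := by
  intro v; rw [voterUpd_apply]; split <;> apply h

lemma voterProc_const_of_const {η0 : V → Bool} {ω : ℕ → V × V} {t : ℕ} {b : Bool}
    (h : ∀ v, voterProc η0 ω t v = b) : ∀ s, t ≤ s → ∀ v, voterProc η0 ω s v = b := by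
  intro s hs
  induction s with
  | zero => simpa [Nat.le_zero.mp hs] using h
  | succ n ih =>
    rcases Nat.lt_or_ge t (n+1) with hlt | hge
    · have := ih (Nat.lt_succ_iff.mp hlt)
      exact voterUpd_const this
    · have : t = n + 1 := le_antisymm hs hge
      simpa [this] using h

lemma voterProc_mono {η0 η1 : V → Bool} (h : ∀ v, η0 v = true → η1 v = true)
    (ω : ℕ → V × V) : ∀ t v, voterProc η0 ω t v = true → voterProc η1 ω t v = true := by
  intro t
  induction t with
  | zero => exact h
  | succ n ih =>
    intro v
    simp only [voterProc, voterUpd_apply]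
    split
    · exact ih _
    · exact ih _

lemma voterProc_not (η0 : V → Bool) (ω : ℕ → V × V) :
    ∀ t v, voterProc (fun w => !η0 w) ω t v = !voterProc η0 ω t v := by
  intro t
  induction t with
  | zero => intro v; rfl
  | succ n ih =>
    intro v
    simp only [voterProc, voterUpd_apply]
    split <;> apply ih

lemma voterProc_congr {η0 : V → Bool} {ω ω' : ℕ → V × V} :
    ∀ t, (∀ i, i < t → ω i = ω' i) → voterProc η0 ω t = voterProc η0 ω' t := by
  intro t
  induction t with
  | zero => intro _; rfl
  | succ n ih =>
    intro h
    show voterUpd (ω n) _ = voterUpd (ω' n) _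
    rw [ih (fun i hi => h i (hi.trans n.lt_succ_self)), h n n.lt_succ_self]

lemma voterProc_add (η0 : V → Bool) (ω : ℕ → V × V) (t : ℕ) :
    ∀ s, voterProc η0 ω (t + s) = voterProc (voterProc η0 ω t) (fun i => ω (t + i)) s := by
  intro s
  induction s with
  | zero => rfl
  | succ n ih =>
    exact congrArg (voterUpd (ω (t + n))) ih

/-- The key identity: the dictator event equals the event that the `δ_k` process reaches
all-ones. -/
lemma dict_iff [Nonempty V] (k : V) (ω : ℕ → V × V) :
    (∀ η0 : V → Bool, consensus η0 ω = η0 k) ↔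
      (∃ t, ∀ v, voterProc (fun v => decide (v = k)) ω t v = true) := by
  constructor
  · intro h
    have := h (fun v => decide (v = k))
    simp only [consensus] at this
    by_cases hP : ∃ t, ∀ v, voterProc (fun v => decide (v = k)) ω t v = true
    · exact hP
    · rw [if_neg hP] at this
      simp at this
  · rintro ⟨t, ht⟩ η0
    by_cases hk : η0 k = true
    · have hall : ∀ v, voterProc η0 ω t v = true := by
        intro v
        refine voterProc_mono ?_ ω t v (ht v)
        intro w hw
        simp only [decide_eq_true_eq] at hw
        rwa [hw]
      simp only [consensus, hk]
      rw [if_pos ⟨t, hall⟩]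
    · have hk' : η0 k = false := by simpa using hk
      have hnot : ∀ v, voterProc (fun w => !η0 w) ω t v = true := by
        intro v
        refine voterProc_mono ?_ ω t v (ht v)
        intro w hw
        simp only [decide_eq_true_eq] at hw
        subst hw; simp [hk']
      have hfalse : ∀ v, voterProc η0 ω t v = false := by
        intro v
        have := hnot v
        rw [voterProc_not] at this
        simpa using this
      have : ¬ ∃ s, ∀ v, voterProc η0 ω s v = true := by
        rintro ⟨s, hs⟩
        rcases le_total s t with hst | hts
        · have := voterProc_const_of_const hs t hst (Classical.arbitrary V)
          rw [hfalse] at this; exact absurd this (by simp)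
        · have := voterProc_const_of_const hfalse s hts (Classical.arbitrary V)
          rw [hs] at this; exact absurd this (by simp)
      simp only [consensus, hk']
      rw [if_neg this]

end det

section force
variable {V : Type*} [DecidableEq V]

def applyL (L : List (V × V)) (η : V → Bool) : V → Bool :=
  L.foldl (fun η e => voterUpd e η) η

set_option linter.unusedSectionVars false

lemma crossing (G : SimpleGraph V) (s : Set V) {a b : V} (w : G.Walk a b)
    (ha : a ∈ s) (hb : b ∉ s) : ∃ p ∈ s, ∃ q, q ∉ s ∧ G.Adj p q := by
  induction w with
  | nil => exact absurd ha hb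
  | @cons a c b hadj w ih =>
    by_cases hc : c ∈ s
    · exact ih hc hb
    · exact ⟨a, ha, c, hc, hadj⟩

lemma forcing_aux [Fintype V] (G : SimpleGraph V) (hconn : G.Connected) :
    ∀ (n : ℕ) (s : Finset V), (Finset.univ \ s).card = n → s.Nonempty →
      ∃ L : List (V × V), (∀ e ∈ L, G.Adj e.1 e.2) ∧
        ∀ (η : V → Bool) (c : Bool), (∀ v ∈ s, η v = c) → ∀ v, applyL L η v = c := by
  intro n
  induction n with
  | zero =>
    intro s hcard _
    refine ⟨[], by simp, ?_⟩
    intro η c hη v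
    have hs : s = Finset.univ := by
      have := Finset.card_eq_zero.mp hcard
      have : Finset.univ ⊆ s := by
        intro x _
        by_contra hx
        have : x ∈ Finset.univ \ s := Finset.mem_sdiff.mpr ⟨Finset.mem_univ x, hx⟩
        simp_all
      exact le_antisymm (Finset.subset_univ s) this |>.symm ▸ rfl
    exact hη v (hs ▸ Finset.mem_univ v)
  | succ n ih =>
    intro s hcard hne
    obtain ⟨y, hy⟩ : ∃ y, y ∈ Finset.univ \ s := Finset.card_pos.mp (hcard ▸ n.succ_pos)
    have hy' : y ∉ s := (Finset.mem_sdiff.mp hy).2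
    obtain ⟨x, hx⟩ := hne
    obtain ⟨p, hp, q, hq, hadj⟩ :=
      crossing G (↑s) ((hconn x y).some) hx (by simpa using hy')
    have hq' : q ∉ s := by simpa using hq
    have hcard' : (Finset.univ \ insert q s).card = n := by
      rw [Finset.sdiff_insert]
      rw [Finset.card_erase_of_mem (Finset.mem_sdiff.mpr ⟨Finset.mem_univ q, hq'⟩), hcard]
      omega
    obtain ⟨L, hLadj, hL⟩ := ih (insert q s) hcard' ⟨x, Finset.mem_insert_of_mem hx⟩
    refine ⟨(p, q) :: L, ?_, ?_⟩
    · rintro e he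
      rcases List.mem_cons.mp he with rfl | he
      · exact hadj
      · exact hLadj e he
    · intro η c hη v
      have : applyL ((p,q) :: L) η = applyL L (voterUpd (p,q) η) := rfl
      rw [this]
      refine hL _ c ?_ v
      intro w hw
      rcases Finset.mem_insert.mp hw with h1 | h2
      · show Function.update η q (η p) w = c
        rw [h1, Function.update_self]
        exact hη p (by simpa using hp)
      · show Function.update η q (η p) w = c
        rw [Function.update_of_ne (by rintro rfl; exact hq' h2)]
        exact hη w h2

lemma forcing [Fintype V] (G : SimpleGraph V) (hconn : G.Connected) :
    ∃ L : List (V × V), (∀ e ∈ L, G.Adj e.1 e.2) ∧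
      ∀ η : V → Bool, ∃ c, ∀ v, applyL L η v = c := by
  have : Nonempty V := hconn.nonempty
  obtain ⟨x⟩ := this
  obtain ⟨L, hadj, hL⟩ := forcing_aux G hconn (Finset.univ \ {x}).card {x} rfl ⟨x, by simp⟩
  exact ⟨L, hadj, fun η => ⟨η x, hL η (η x) (by simp) ⟩⟩

end force

section det2
variable {V : Type*} [DecidableEq V]

lemma voterProc_shift (η : V → Bool) (ω : ℕ → V × V) :
    ∀ s, voterProc η ω (s+1) = voterProc (voterUpd (ω 0) η) (fun i => ω (i+1)) s := by
  intro s
  induction s with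
  | zero => rfl
  | succ n ih =>
    show voterUpd (ω (n+1)) (voterProc η ω (n+1)) = _
    rw [ih]
    rfl

lemma voterProc_list : ∀ (L : List (V × V)) (η : V → Bool) (ω : ℕ → V × V),
    (∀ i (hi : i < L.length), ω i = L.get ⟨i, hi⟩) →
    voterProc η ω L.length = applyL L η := by
  intro L
  induction L with
  | nil => intro η ω _; rfl
  | cons e L ih =>
    intro η ω h
    show voterProc η ω (L.length + 1) = applyL L (voterUpd e η)
    rw [voterProc_shift, h 0 (Nat.succ_pos _)]
    exact ih _ _ (fun i hi => h (i+1) (Nat.succ_lt_succ hi))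

end det2

set_option linter.unusedSectionVars false

lemma measurableSet_all {X : Type*} [Finite X] [MeasurableSpace X] [MeasurableSingletonClass X]
    (s : Set X) : MeasurableSet s := s.toFinite.measurableSet

section prob
variable {V : Type*} [Fintype V] [DecidableEq V] [MeasurableSpace V] [MeasurableSingletonClass V]
variable (G : SimpleGraph V) [DecidableRel G.Adj]

def blk (S : Finset ℕ) (ω : ℕ → {e : V × V // G.Adj e.1 e.2}) :
    (i : ↥S) → {e : V × V // G.Adj e.1 e.2} := fun i => ω i

/-- Extend a finite block of directed edges to a full sequence, with junk elsewhere. -/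
noncomputable def extD [Nonempty V] (t : ℕ) (g : ↥(Finset.range t) → {e : V × V // G.Adj e.1 e.2}) :
    ℕ → V × V := fun i =>
  if h : i ∈ Finset.range t then ((g ⟨i, h⟩ : {e : V × V // G.Adj e.1 e.2}) : V × V)
  else (Classical.arbitrary V, Classical.arbitrary V)

lemma event_eq [Nonempty V] (η0 : V → Bool) (t : ℕ) (P : (V → Bool) → Prop) :
    {ω : ℕ → {e : V × V // G.Adj e.1 e.2} | P (voterProc η0 (fun i => ((ω i : V × V))) t)}
      = blk G (Finset.range t) ⁻¹'
          {g | P (voterProc η0 (extD G t g) t)} := by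
  ext ω
  simp only [Set.mem_setOf_eq, Set.mem_preimage]
  have : voterProc η0 (fun i => ((ω i : V × V))) t
      = voterProc η0 (extD G t (blk G (Finset.range t) ω)) t := by
    refine voterProc_congr t ?_
    intro i hi
    simp [extD, blk, Finset.mem_range, hi]
  rw [this]

variable (μω : Measure (ℕ → {e : V × V // G.Adj e.1 e.2}))

lemma indep_two (hindep : iIndepFun (fun k ω => ω k) μω)
    (S T : Finset ℕ) (hST : Disjoint S T)
    (A : Set (↥S → {e : V × V // G.Adj e.1 e.2}))
    (B : Set (↥T → {e : V × V // G.Adj e.1 e.2})) :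
    μω (blk G S ⁻¹' A ∩ blk G T ⁻¹' B) = μω (blk G S ⁻¹' A) * μω (blk G T ⁻¹' B) := by
  have h := hindep.indepFun_finset S T hST (fun i => measurable_pi_apply i)
  exact h.measure_inter_preimage_eq_mul A B (measurableSet_all A) (measurableSet_all B)

lemma meas_blk_pre (S : Finset ℕ) (A : Set (↥S → {e : V × V // G.Adj e.1 e.2})) :
    MeasurableSet (blk G S ⁻¹' A) :=
  (measurable_pi_lambda _ (fun _ => measurable_pi_apply _)) (measurableSet_all A)

/-- the single-coordinate event as a block preimage -/
lemma coord_event (t : ℕ) (e : {e : V × V // G.Adj e.1 e.2}) :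
    {ω : ℕ → {e : V × V // G.Adj e.1 e.2} | ω t = e}
      = blk G {t} ⁻¹' {g | g ⟨t, Finset.mem_singleton_self t⟩ = e} := rfl

/-- One-step recursion for the single-site probabilities. -/
lemma p_rec [Nonempty V]
    (hindep : iIndepFun (fun k ω => ω k) μω)
    (η0 : V → Bool) (t : ℕ) (v : V) :
    μω {ω | voterProc η0 (fun i => ((ω i : V × V))) (t+1) v = true}
      = ∑ e : {e : V × V // G.Adj e.1 e.2},
          μω {ω | ω t = e} *
            μω {ω | voterProc η0 (fun i => ((ω i : V × V))) t
                  (if v = (e : V × V).2 then (e : V × V).1 else v) = true} := by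
  classical
  have hsplit : {ω : ℕ → {e : V × V // G.Adj e.1 e.2} |
        voterProc η0 (fun i => ((ω i : V × V))) (t+1) v = true}
      = ⋃ e : {e : V × V // G.Adj e.1 e.2},
          ({ω | ω t = e} ∩ {ω | voterProc η0 (fun i => ((ω i : V × V))) t
              (if v = (e : V × V).2 then (e : V × V).1 else v) = true}) := by
    ext ω
    simp only [Set.mem_setOf_eq, Set.mem_iUnion, Set.mem_inter_iff]
    constructor
    · intro h
      refine ⟨ω t, rfl, ?_⟩
      by_cases hv : v = (↑(ω t) : V × V).2 <;>
        simpa [voterProc, voterUpd, Function.update_apply, hv] using h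
    · rintro ⟨e, he, h⟩
      subst he
      by_cases hv : v = (↑(ω t) : V × V).2 <;>
        simpa [voterProc, voterUpd, Function.update_apply, hv] using h
  have hd : Pairwise (Function.onFun Disjoint fun e : {e : V × V // G.Adj e.1 e.2} =>
      ({ω : ℕ → {e : V × V // G.Adj e.1 e.2} | ω t = e} ∩
        {ω | voterProc η0 (fun i => ((ω i : V × V))) t
            (if v = (e : V × V).2 then (e : V × V).1 else v) = true})) := by
    intro e e' hee
    simp only [Function.onFun, Set.disjoint_left]
    rintro ω ⟨h1, _⟩ ⟨h2, _⟩
    exact hee (h1 ▸ h2 ▸ rfl)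
  have hm : ∀ e : {e : V × V // G.Adj e.1 e.2},
      MeasurableSet ({ω : ℕ → {e : V × V // G.Adj e.1 e.2} | ω t = e} ∩
        {ω | voterProc η0 (fun i => ((ω i : V × V))) t
            (if v = (e : V × V).2 then (e : V × V).1 else v) = true}) := by
    intro e
    refine MeasurableSet.inter ?_ ?_
    · rw [coord_event]; exact meas_blk_pre G _ _
    · rw [event_eq G η0 t (fun η => η (if v = (e : V × V).2 then (e:V×V).1 else v) = true)]
      exact meas_blk_pre G _ _
  rw [hsplit, measure_iUnion hd hm, tsum_fintype]
  congr 1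
  ext e
  rw [event_eq G η0 t (fun η => η (if v = (e : V × V).2 then (e:V×V).1 else v) = true),
    coord_event]
  rw [indep_two G μω hindep {t} (Finset.range t) (by simp) _ _]

end prob

section sumstep
variable {V : Type*} [Fintype V] [DecidableEq V] [MeasurableSpace V] [MeasurableSingletonClass V]
variable (G : SimpleGraph V) [DecidableRel G.Adj]
variable (μω : Measure (ℕ → {e : V × V // G.Adj e.1 e.2})) [IsProbabilityMeasure μω]

lemma card_DE : Fintype.card {e : V × V // G.Adj e.1 e.2} = 2 * G.edgeFinset.card := by
  rw [← SimpleGraph.dart_card_eq_twice_card_edges]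
  exact Fintype.card_congr ⟨fun e => ⟨e.1, e.2⟩, fun d => ⟨d.toProd, d.adj⟩,
    fun e => rfl, fun d => rfl⟩

lemma edgeCard_ne_zero (hDE : Nonempty {e : V × V // G.Adj e.1 e.2}) :
    G.edgeFinset.card ≠ 0 := by
  intro h
  have := card_DE G
  rw [h] at this
  simp only [Nat.mul_zero] at this
  exact (Fintype.card_ne_zero (α := {e : V × V // G.Adj e.1 e.2})) this

lemma sum_p_step [Nonempty V]
    (hindep : iIndepFun (fun k ω => ω k) μω)
    (hunif : ∀ (k : ℕ) (e : {e : V × V // G.Adj e.1 e.2}),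
      μω {ω | ω k = e} = (2 * G.edgeFinset.card : ℝ≥0∞)⁻¹)
    (hDE : Nonempty {e : V × V // G.Adj e.1 e.2})
    (η0 : V → Bool) (t : ℕ) :
    ∑ v : V, μω {ω | voterProc η0 (fun i => ((ω i : V × V))) (t+1) v = true}
      = ∑ v : V, μω {ω | voterProc η0 (fun i => ((ω i : V × V))) t v = true} := by
  classical
  set c : ℝ≥0∞ := (2 * G.edgeFinset.card : ℝ≥0∞)⁻¹ with hc
  set p : V → ℝ≥0∞ := fun v => μω {ω | voterProc η0 (fun i => ((ω i : V × V))) t v = true}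
    with hp
  have hcne : (2 * (G.edgeFinset.card : ℝ≥0∞)) ≠ 0 :=
    mul_ne_zero (by norm_num) (Nat.cast_ne_zero.mpr (edgeCard_ne_zero G hDE))
  have hcnetop : (2 * (G.edgeFinset.card : ℝ≥0∞)) ≠ ∞ := by
    simp [ENNReal.mul_ne_top]
  have hctop : c ≠ ∞ := by
    rw [hc]; exact ENNReal.inv_ne_top.mpr hcne
  have hrec : ∀ v, μω {ω | voterProc η0 (fun i => ((ω i : V × V))) (t+1) v = true}
      = ∑ e : {e : V × V // G.Adj e.1 e.2},
          c * p (if v = (e : V × V).2 then (e : V × V).1 else v) := by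
    intro v
    rw [p_rec G μω hindep η0 t v]
    refine Finset.sum_congr rfl ?_
    intro e _
    rw [hunif t e]
  have key : ∀ e : {e : V × V // G.Adj e.1 e.2},
      (∑ v : V, p (if v = (e : V × V).2 then (e : V × V).1 else v)) + p (e : V × V).2
        = (∑ v : V, p v) + p (e : V × V).1 := by
    intro e
    have h2 : ∀ (f : V → ℝ≥0∞), ∑ v : V, f v
        = (∑ v ∈ Finset.univ.erase (e : V × V).2, f v) + f (e : V × V).2 :=
      fun f => (Finset.sum_erase_add _ _ (Finset.mem_univ _)).symm
    rw [h2 (fun v => p (if v = (e : V × V).2 then (e : V × V).1 else v)), h2 p]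
    have herase : ∀ v ∈ Finset.univ.erase (e : V × V).2,
        p (if v = (e : V × V).2 then (e : V × V).1 else v) = p v := by
      intro v hv; rw [if_neg (Finset.ne_of_mem_erase hv)]
    rw [Finset.sum_congr rfl herase, if_pos rfl]
    ring
  -- sum over v and e
  have hswap : ∑ v : V, μω {ω | voterProc η0 (fun i => ((ω i : V × V))) (t+1) v = true}
      = ∑ e : {e : V × V // G.Adj e.1 e.2},
          c * ∑ v : V, p (if v = (e : V × V).2 then (e : V × V).1 else v) := by
    rw [Finset.sum_congr rfl (fun v _ => hrec v), Finset.sum_comm]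
    exact Finset.sum_congr rfl (fun e _ => (Finset.mul_sum _ _ _).symm)
  set S : ℝ≥0∞ := ∑ v : V, p v with hS
  have hR : (∑ e : {e : V × V // G.Adj e.1 e.2}, c * p (e : V × V).1)
      = ∑ e : {e : V × V // G.Adj e.1 e.2}, c * p (e : V × V).2 := by
    refine Fintype.sum_equiv ⟨fun e => ⟨((e : V × V).2, (e : V × V).1), e.2.symm⟩,
      fun e => ⟨((e : V × V).2, (e : V × V).1), e.2.symm⟩, fun e => rfl, fun e => rfl⟩ _ _ ?_
    intro e; rfl
  have hR2top : (∑ e : {e : V × V // G.Adj e.1 e.2}, c * p (e : V × V).2) ≠ ∞ := by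
    refine (ENNReal.sum_lt_top.mpr ?_).ne
    intro e _
    exact ENNReal.mul_lt_top hctop.lt_top (measure_lt_top μω _)
  have hcS : (∑ _e : {e : V × V // G.Adj e.1 e.2}, c * S) = S := by
    rw [Finset.sum_const, Finset.card_univ, card_DE G, nsmul_eq_mul]
    push_cast
    rw [← mul_assoc, hc, ENNReal.mul_inv_cancel hcne hcnetop, one_mul]
  have hmain : (∑ v : V, μω {ω | voterProc η0 (fun i => ((ω i : V × V))) (t+1) v = true})
        + (∑ e : {e : V × V // G.Adj e.1 e.2}, c * p (e : V × V).2)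
      = S + (∑ e : {e : V × V // G.Adj e.1 e.2}, c * p (e : V × V).2) := by
    conv_rhs => rw [← hR]
    rw [hswap, ← hcS, ← Finset.sum_add_distrib, ← Finset.sum_add_distrib]
    refine Finset.sum_congr rfl ?_
    intro e _
    rw [← mul_add, ← mul_add, key e]
  exact (ENNReal.add_left_inj hR2top).mp hmain

end sumstep

section ncbound
set_option linter.unusedSectionVars false
variable {V : Type*} [Fintype V] [DecidableEq V] [MeasurableSpace V] [MeasurableSingletonClass V]
variable (G : SimpleGraph V) [DecidableRel G.Adj]
variable (μω : Measure (ℕ → {e : V × V // G.Adj e.1 e.2})) [IsProbabilityMeasure μω]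

lemma block_event_eq (hDE : Nonempty {e : V × V // G.Adj e.1 e.2})
    (L' : List {e : V × V // G.Adj e.1 e.2}) (T : ℕ) :
    {ω : ℕ → {e : V × V // G.Adj e.1 e.2} |
        ∀ i ∈ Finset.Ico T (T + L'.length), ω i = L'.getD (i - T) (Classical.arbitrary _)}
      = blk G (Finset.Ico T (T + L'.length)) ⁻¹'
          {g | ∀ i (hi : i ∈ Finset.Ico T (T + L'.length)),
              g ⟨i, hi⟩ = L'.getD (i - T) (Classical.arbitrary _)} := by
  have := hDE
  ext ω
  simp only [Set.mem_setOf_eq, Set.mem_preimage, blk]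

lemma block_prob (hDE : Nonempty {e : V × V // G.Adj e.1 e.2})
    (hindep : iIndepFun (fun k ω => ω k) μω)
    (hunif : ∀ (k : ℕ) (e : {e : V × V // G.Adj e.1 e.2}),
      μω {ω | ω k = e} = (2 * G.edgeFinset.card : ℝ≥0∞)⁻¹)
    (L' : List {e : V × V // G.Adj e.1 e.2}) (T : ℕ) :
    μω {ω | ∀ i ∈ Finset.Ico T (T + L'.length), ω i = L'.getD (i - T) (Classical.arbitrary _)}
      = ((2 * G.edgeFinset.card : ℝ≥0∞)⁻¹) ^ L'.length := by
  have := hDE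
  have hset : {ω : ℕ → {e : V × V // G.Adj e.1 e.2} |
        ∀ i ∈ Finset.Ico T (T + L'.length), ω i = L'.getD (i - T) (Classical.arbitrary _)}
      = ⋂ i ∈ Finset.Ico T (T + L'.length),
          (fun ω : ℕ → {e : V × V // G.Adj e.1 e.2} => ω i) ⁻¹'
            {L'.getD (i - T) (Classical.arbitrary _)} := by
    ext ω
    simp only [Set.mem_setOf_eq, Set.mem_iInter, Set.mem_preimage, Set.mem_singleton_iff]
  rw [hset]
  rw [hindep.measure_inter_preimage_eq_mul (Finset.Ico T (T + L'.length))
    (fun i _ => measurableSet_all _)]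
  have : ∀ i ∈ Finset.Ico T (T + L'.length),
      μω ((fun k (ω : ℕ → {e : V × V // G.Adj e.1 e.2}) => ω k) i ⁻¹'
          {L'.getD (i - T) (Classical.arbitrary _)})
        = (2 * G.edgeFinset.card : ℝ≥0∞)⁻¹ := fun i _ => hunif i _
  rw [Finset.prod_congr rfl this, Finset.prod_const, Nat.card_Ico]
  congr 1
  omega

lemma nc_step [Nonempty V] (hDE : Nonempty {e : V × V // G.Adj e.1 e.2})
    (hindep : iIndepFun (fun k ω => ω k) μω)
    (hunif : ∀ (k : ℕ) (e : {e : V × V // G.Adj e.1 e.2}),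
      μω {ω | ω k = e} = (2 * G.edgeFinset.card : ℝ≥0∞)⁻¹)
    (η0 : V → Bool) (L' : List {e : V × V // G.Adj e.1 e.2})
    (hforce : ∀ η : V → Bool, ∃ c, ∀ v,
      applyL (L'.map Subtype.val) η v = c)
    (T : ℕ) :
    μω {ω | ¬ ∃ b, ∀ v, voterProc η0 (fun i => ((ω i : V × V))) (T + L'.length) v = b}
      ≤ μω {ω | ¬ ∃ b, ∀ v, voterProc η0 (fun i => ((ω i : V × V))) T v = b}
        * (1 - ((2 * G.edgeFinset.card : ℝ≥0∞)⁻¹) ^ L'.length) := by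
  have := hDE
  set ℓ := L'.length with hℓ
  set B : Set (ℕ → {e : V × V // G.Adj e.1 e.2}) :=
    {ω | ∀ i ∈ Finset.Ico T (T + ℓ), ω i = L'.getD (i - T) (Classical.arbitrary _)} with hB
  -- Step A : on B the configuration is constant at time T + ℓ
  have hBconst : ∀ ω ∈ B, ∃ b, ∀ v, voterProc η0 (fun i => ((ω i : V × V))) (T + ℓ) v = b := by
    intro ω hω
    have hlen : (L'.map Subtype.val).length = ℓ := by
      rw [List.length_map]
    have hmatch : ∀ i (hi : i < (L'.map Subtype.val).length),
        (fun j => ((ω (T + j) : V × V))) i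
          = (L'.map Subtype.val).get ⟨i, hi⟩ := by
      intro i hi
      have hi' : i < ℓ := by rwa [hlen] at hi
      have h1 : ω (T + i) = L'.getD ((T + i) - T) (Classical.arbitrary _) :=
        hω (T + i) (Finset.mem_Ico.mpr ⟨Nat.le_add_right _ _, by omega⟩)
      have h2 : (T + i) - T = i := by omega
      have h3 : L'.getD i (Classical.arbitrary _) = L'.get ⟨i, hi'⟩ := by
        rw [List.getD_eq_getElem _ _ hi']
        simp
      simp only [h1, h2, h3, List.get_eq_getElem, List.getElem_map]
    have := voterProc_list (L'.map Subtype.val)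
      (voterProc η0 (fun i => ((ω i : V × V))) T) (fun j => ((ω (T + j) : V × V))) hmatch
    obtain ⟨c, hc⟩ := hforce (voterProc η0 (fun i => ((ω i : V × V))) T)
    refine ⟨c, fun v => ?_⟩
    have hadd := voterProc_add η0 (fun i => ((ω i : V × V))) T ℓ
    rw [← hlen] at hadd ⊢
    rw [hadd, this]
    exact hc v
  -- Step B : inclusion into the independent product
  have hincl : {ω | ¬ ∃ b, ∀ v, voterProc η0 (fun i => ((ω i : V × V))) (T + ℓ) v = b}
      ⊆ {ω | ¬ ∃ b, ∀ v, voterProc η0 (fun i => ((ω i : V × V))) T v = b} ∩ Bᶜ := by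
    intro ω h
    simp only [Set.mem_setOf_eq] at h
    constructor
    · simp only [Set.mem_setOf_eq]
      rintro ⟨b, hb⟩
      exact h ⟨b, fun v => voterProc_const_of_const hb (T + ℓ) (Nat.le_add_right _ _) v⟩
    · intro hωB
      exact h (hBconst ω hωB)
  refine le_trans (measure_mono hincl) ?_
  have hX : {ω : ℕ → {e : V × V // G.Adj e.1 e.2} | ¬ ∃ b, ∀ v, voterProc η0 (fun i => ((ω i : V × V))) T v = b}
      = blk G (Finset.range T) ⁻¹'
          {g | ¬ ∃ b, ∀ v, voterProc η0 (extD G T g) T v = b} :=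
    event_eq G η0 T (fun η => ¬ ∃ b, ∀ v, η v = b)
  have hBpre := block_event_eq G hDE L' T
  have hdisj : Disjoint (Finset.range T) (Finset.Ico T (T + ℓ)) := by
    rw [Finset.disjoint_left]
    intro i hi1 hi2
    rw [Finset.mem_range] at hi1
    rw [Finset.mem_Ico] at hi2
    omega
  have hBc : Bᶜ = blk G (Finset.Ico T (T + ℓ)) ⁻¹'
      ({g | ∀ i (hi : i ∈ Finset.Ico T (T + ℓ)),
          g ⟨i, hi⟩ = L'.getD (i - T) (Classical.arbitrary _)}ᶜ) := by
    rw [Set.preimage_compl, ← hBpre]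
  rw [hX, hBc, indep_two G μω hindep _ _ hdisj, ← hX]
  have hμBc : μω (blk G (Finset.Ico T (T + ℓ)) ⁻¹'
      ({g | ∀ i (hi : i ∈ Finset.Ico T (T + ℓ)),
          g ⟨i, hi⟩ = L'.getD (i - T) (Classical.arbitrary _)}ᶜ)) =
      1 - ((2 * G.edgeFinset.card : ℝ≥0∞)⁻¹) ^ ℓ := by
    rw [Set.preimage_compl, prob_compl_eq_one_sub (meas_blk_pre G _ _), ← hBpre,
      block_prob G μω hDE hindep hunif L' T]
  rw [hμBc]

lemma nc_pow [Nonempty V] (hDE : Nonempty {e : V × V // G.Adj e.1 e.2})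
    (hindep : iIndepFun (fun k ω => ω k) μω)
    (hunif : ∀ (k : ℕ) (e : {e : V × V // G.Adj e.1 e.2}),
      μω {ω | ω k = e} = (2 * G.edgeFinset.card : ℝ≥0∞)⁻¹)
    (η0 : V → Bool) (L' : List {e : V × V // G.Adj e.1 e.2})
    (hforce : ∀ η : V → Bool, ∃ c, ∀ v,
      applyL (L'.map Subtype.val) η v = c)
    (j : ℕ) :
    μω {ω | ¬ ∃ b, ∀ v, voterProc η0 (fun i => ((ω i : V × V))) (j * L'.length) v = b}
      ≤ (1 - ((2 * G.edgeFinset.card : ℝ≥0∞)⁻¹) ^ L'.length) ^ j := by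
  induction j with
  | zero => simpa using prob_le_one
  | succ j ih =>
    have hstep := nc_step G μω hDE hindep hunif η0 L' hforce (j * L'.length)
    have : (j + 1) * L'.length = j * L'.length + L'.length := by ring
    rw [this]
    refine le_trans hstep ?_
    rw [pow_succ]
    exact mul_le_mul_left ih _

end ncbound

section main
set_option linter.unusedSectionVars false
variable {V : Type*} [Fintype V] [DecidableEq V] [MeasurableSpace V] [MeasurableSingletonClass V]
variable (G : SimpleGraph V) [DecidableRel G.Adj]
variable (μω : Measure (ℕ → {e : V × V // G.Adj e.1 e.2})) [IsProbabilityMeasure μω]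

lemma muA (hconn : G.Connected)
    (hindep : iIndepFun (fun k ω => ω k) μω)
    (hunif : ∀ (k : ℕ) (e : {e : V × V // G.Adj e.1 e.2}),
      μω {ω | ω k = e} = (2 * G.edgeFinset.card : ℝ≥0∞)⁻¹)
    (k : V) :
    μω {ω | ∃ t, ∀ v, voterProc (fun v => decide (v = k))
          (fun i => ((ω i : V × V))) t v = true}
      = (Fintype.card V : ℝ≥0∞)⁻¹ := by
  classical
  have hV : Nonempty V := hconn.nonempty
  by_cases hDE : Nonempty {e : V × V // G.Adj e.1 e.2}
  swap
  · exfalso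
    have h1 : (μω Set.univ) = 1 := measure_univ
    have he : IsEmpty {e : V × V // G.Adj e.1 e.2} := not_nonempty_iff.mp hDE
    have he2 : IsEmpty (ℕ → {e : V × V // G.Adj e.1 e.2}) := ⟨fun f => he.false (f 0)⟩
    rw [Set.univ_eq_empty_iff.mpr he2, measure_empty] at h1
    exact zero_ne_one h1
  set η0 : V → Bool := fun v => decide (v = k) with hη0
  set p : ℕ → V → ℝ≥0∞ :=
    fun t v => μω {ω | voterProc η0 (fun i => ((ω i : V × V))) t v = true} with hpdef
  -- the sum of p is constantly 1
  have hS : ∀ t, ∑ v : V, p t v = 1 := by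
    intro t
    induction t with
    | zero =>
      have h0 : ∀ v : V, p 0 v = if v = k then 1 else 0 := by
        intro v
        by_cases hv : v = k
        · subst hv
          have huniv : {ω : ℕ → {e : V × V // G.Adj e.1 e.2} |
              voterProc η0 (fun i => ((ω i : V × V))) 0 v = true} = Set.univ := by
            ext ω; simp [voterProc, hη0]
          simp [hpdef, huniv]
        · have : {ω : ℕ → {e : V × V // G.Adj e.1 e.2} |
              voterProc η0 (fun i => ((ω i : V × V))) 0 v = true} = ∅ := by
            ext ω; simp [voterProc, hη0, hv]
          simp [hpdef, this, hv]
      rw [Finset.sum_congr rfl (fun v _ => h0 v)]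
      simp
    | succ t ih =>
      rw [← ih]
      exact sum_p_step G μω hindep hunif hDE η0 t
  set AT : ℕ → Set (ℕ → {e : V × V // G.Adj e.1 e.2}) :=
    fun t => {ω | ∀ v, voterProc η0 (fun i => ((ω i : V × V))) t v = true} with hAT
  set NC : ℕ → Set (ℕ → {e : V × V // G.Adj e.1 e.2}) :=
    fun t => {ω | ¬ ∃ b, ∀ v, voterProc η0 (fun i => ((ω i : V × V))) t v = b} with hNC
  have hATmono : Monotone AT := by
    intro s t hst ω hω
    exact fun v => voterProc_const_of_const hω t hst v
  have hn0 : (Fintype.card V : ℝ≥0∞) ≠ 0 := by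
    simp [Fintype.card_ne_zero]
  have hntop : (Fintype.card V : ℝ≥0∞) ≠ ∞ := ENNReal.natCast_ne_top _
  -- upper bound
  have hupper : ∀ t, (Fintype.card V : ℝ≥0∞) * μω (AT t) ≤ 1 := by
    intro t
    have h1 : ∀ v : V, μω (AT t) ≤ p t v := by
      intro v
      exact measure_mono (fun ω hω => hω v)
    calc (Fintype.card V : ℝ≥0∞) * μω (AT t)
        = ∑ _v : V, μω (AT t) := by
          rw [Finset.sum_const, Finset.card_univ, nsmul_eq_mul]
      _ ≤ ∑ v : V, p t v := Finset.sum_le_sum (fun v _ => h1 v)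
      _ = 1 := hS t
  -- lower bound
  have hlower : ∀ t, (1 : ℝ≥0∞) ≤ (Fintype.card V : ℝ≥0∞) * μω (AT t)
      + (Fintype.card V : ℝ≥0∞) * μω (NC t) := by
    intro t
    have h2 : ∀ v : V, p t v ≤ μω (AT t) + μω (NC t) := by
      intro v
      refine le_trans (measure_mono ?_) (measure_union_le _ _)
      intro ω hω
      by_cases hc : ∃ b, ∀ w, voterProc η0 (fun i => ((ω i : V × V))) t w = b
      · left
        obtain ⟨b, hb⟩ := hc
        have hbv : b = true := by rw [← hb v]; exact hω
        exact fun w => hbv ▸ hb w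
      · right; exact hc
    calc (1 : ℝ≥0∞) = ∑ v : V, p t v := (hS t).symm
      _ ≤ ∑ _v : V, (μω (AT t) + μω (NC t)) := Finset.sum_le_sum (fun v _ => h2 v)
      _ = (Fintype.card V : ℝ≥0∞) * (μω (AT t) + μω (NC t)) := by
          rw [Finset.sum_const, Finset.card_univ, nsmul_eq_mul]
      _ = _ := by ring
  -- the union
  have hgoal : {ω : ℕ → {e : V × V // G.Adj e.1 e.2} | ∃ t, ∀ v,
      voterProc (fun v => decide (v = k)) (fun i => ((ω i : V × V))) t v = true}
      = ⋃ t, AT t := by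
    ext ω
    simp only [Set.mem_setOf_eq, Set.mem_iUnion, hAT, hη0]
  have hmuA : μω (⋃ t, AT t) = ⨆ t, μω (AT t) := hATmono.measure_iUnion
  have hAupper : (Fintype.card V : ℝ≥0∞) * μω (⋃ t, AT t) ≤ 1 := by
    rw [hmuA, ENNReal.mul_iSup]
    exact iSup_le hupper
  -- the forcing list and the NC decay
  obtain ⟨L, hadjL, hforceL⟩ := forcing G hconn
  set L' : List {e : V × V // G.Adj e.1 e.2} :=
    L.attach.map (fun x => (⟨x.1, hadjL x.1 x.2⟩ : {e : V × V // G.Adj e.1 e.2})) with hL'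
  have hL'map : L'.map Subtype.val = L := by
    rw [hL', List.map_map]
    have h1 : (Subtype.val ∘ fun x : {x // x ∈ L} =>
        (⟨x.1, hadjL x.1 x.2⟩ : {e : V × V // G.Adj e.1 e.2})) = fun x => x.1 := rfl
    rw [h1]
    exact List.attach_map_subtype_val L
  have hforce : ∀ η : V → Bool, ∃ c, ∀ v, applyL (L'.map Subtype.val) η v = c := by
    rw [hL'map]; exact hforceL
  set q : ℝ≥0∞ := ((2 * G.edgeFinset.card : ℝ≥0∞)⁻¹) ^ L'.length with hq
  have h2Mne : (2 * (G.edgeFinset.card : ℝ≥0∞)) ≠ 0 :=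
    mul_ne_zero (by norm_num) (Nat.cast_ne_zero.mpr (edgeCard_ne_zero G hDE))
  have h2Mnetop : (2 * (G.edgeFinset.card : ℝ≥0∞)) ≠ ∞ := by
    simp [ENNReal.mul_ne_top]
  have hqne : q ≠ 0 := pow_ne_zero _ (ENNReal.inv_ne_zero.mpr h2Mnetop)
  have hsub : (1 : ℝ≥0∞) - q < 1 := ENNReal.sub_lt_self ENNReal.one_ne_top one_ne_zero hqne
  have hlim : Filter.Tendsto (fun j => ((1 : ℝ≥0∞) - q) ^ j) Filter.atTop (nhds 0) :=
    ENNReal.tendsto_pow_atTop_nhds_zero_of_lt_one hsub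
  -- 1 ≤ n μ(A) + n (1-q)^j for every j
  have hlower2 : ∀ j : ℕ, (1 : ℝ≥0∞) ≤ (Fintype.card V : ℝ≥0∞) * μω (⋃ t, AT t)
      + (Fintype.card V : ℝ≥0∞) * ((1 - q) ^ j) := by
    intro j
    have hNCb : μω (NC (j * L'.length)) ≤ (1 - q) ^ j := by
      have := nc_pow G μω hDE hindep hunif η0 L' hforce j
      exact this
    refine le_trans (hlower (j * L'.length)) ?_
    gcongr
    · exact Set.subset_iUnion AT _
  have hAlower : (1 : ℝ≥0∞) ≤ (Fintype.card V : ℝ≥0∞) * μω (⋃ t, AT t) := by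
    have htend : Filter.Tendsto
        (fun j => (Fintype.card V : ℝ≥0∞) * μω (⋃ t, AT t)
          + (Fintype.card V : ℝ≥0∞) * ((1 - q) ^ j)) Filter.atTop
        (nhds ((Fintype.card V : ℝ≥0∞) * μω (⋃ t, AT t))) := by
      have h1 : Filter.Tendsto (fun j => (Fintype.card V : ℝ≥0∞) * ((1 - q) ^ j))
          Filter.atTop (nhds 0) := by
        have := ENNReal.Tendsto.const_mul hlim (Or.inr hntop)
        simpa using this
      have := Filter.Tendsto.add
        (tendsto_const_nhds (x := (Fintype.card V : ℝ≥0∞) * μω (⋃ t, AT t))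
          (f := Filter.atTop (α := ℕ))) h1
      simpa using this
    exact ge_of_tendsto' htend hlower2
  have hone : (Fintype.card V : ℝ≥0∞) * μω (⋃ t, AT t) = 1 := le_antisymm hAupper hAlower
  rw [hgoal]
  calc μω (⋃ t, AT t)
      = ((Fintype.card V : ℝ≥0∞)⁻¹ * (Fintype.card V : ℝ≥0∞)) * μω (⋃ t, AT t) := by
        rw [ENNReal.inv_mul_cancel hn0 hntop, one_mul]
    _ = (Fintype.card V : ℝ≥0∞)⁻¹ * ((Fintype.card V : ℝ≥0∞) * μω (⋃ t, AT t)) := by ring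
    _ = (Fintype.card V : ℝ≥0∞)⁻¹ := by rw [hone, mul_one]

end main

/-- For a finite connected graph with `n` vertices and i.i.d. uniform edge
selections, each vertex `k` is the dictator (the a.s. well-defined vertex whose initial
opinion always becomes the consensus) with probability `1/n`. -/
theorem stmt11 {V : Type*} [Fintype V] [DecidableEq V]
    [MeasurableSpace V] [MeasurableSingletonClass V]
    (G : SimpleGraph V) [DecidableRel G.Adj] (hconn : G.Connected)
    (μω : Measure (ℕ → {e : V × V // G.Adj e.1 e.2})) [IsProbabilityMeasure μω]
    (hindep : iIndepFun (fun k ω => ω k) μω)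
    (hunif : ∀ (k : ℕ) (e : {e : V × V // G.Adj e.1 e.2}),
      μω {ω | ω k = e} = (2 * G.edgeFinset.card : ℝ≥0∞)⁻¹) :
    ∀ k : V,
      μω {ω | ∀ η0 : V → Bool, consensus η0 (fun i => ((ω i : V × V))) = η0 k}
        = (Fintype.card V : ℝ≥0∞)⁻¹ := by
  intro k
  have hV : Nonempty V := hconn.nonempty
  have hset : {ω : ℕ → {e : V × V // G.Adj e.1 e.2} |
      ∀ η0 : V → Bool, consensus η0 (fun i => ((ω i : V × V))) = η0 k}
      = {ω | ∃ t, ∀ v, voterProc (fun v => decide (v = k))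
          (fun i => ((ω i : V × V))) t v = true} := by
    ext ω
    exact dict_iff k (fun i => ((ω i : V × V)))
  rw [hset]
  exact muA G μω hconn hindep hunif k
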